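/- Let q be a prime power, l ≥ 1, t = q^l, and F = GF(t²) (so GF(q) ⊆ GF(t) ⊆ F). Let L = (α₁, …, αₙ) enumerate the set {α ∈ F : α ≠ 0 and α^{t−1} + 1 ≠ 0} (equivalently, α^t + α ≠ 0). Then for every integer i with 1 ≤ i ≤ q−2 and every c ∈ GF(q)ⁿ: c belongs to Γ(L, (X^t + X)^i) if and only if c belongs to Γ(L, (X^{t−1} + 1)^i) and Σₖ cₖ · (αₖ^t + αₖ)^{−i} = 0 in F. -/

import Mathlib

open Polynomial

/-- The syndrome polynomial `Σᵢ cᵢ ∏_{j≠i} (X − αⱼ)` of a word `c ∈ GF(q)ⁿ` with respect to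
the locator tuple `α`, with coefficients viewed in the extension field `F`. -/
noncomputable def goppaSum {K F : Type*} [Field K] [Field F] [Algebra K F] {n : ℕ}
    (α : Fin n → F) (c : Fin n → K) : Polynomial F :=
  ∑ i, Polynomial.C (algebraMap K F (c i)) *
    ∏ j ∈ Finset.univ.erase i, (Polynomial.X - Polynomial.C (α j))

open Finset in
private lemma goppa_master {F : Type*} [Field F] [Fintype F]
    (p e t : ℕ) [hp : Fact p.Prime] [CharP F p]
    (ht : t = p ^ e) (hF : Fintype.card F = t ^ 2)
    {n : ℕ} (α : Fin n → F) (hα : Function.Injective α)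
    (hrange : ∀ x : F, x ∈ Set.range α ↔ x ^ t + x ≠ 0)
    (i : ℕ) (hi1 : 1 ≤ i) (hit : i + 2 ≤ t)
    (b : Fin n → F) (hb : ∀ k, b k ^ t = b k) :
    ((X ^ t + X : F[X]) ^ i ∣ ∑ k, C (b k) * ∏ j ∈ univ.erase k, (X - C (α j))) ↔
      (((X ^ (t - 1) + 1 : F[X]) ^ i ∣ ∑ k, C (b k) * ∏ j ∈ univ.erase k, (X - C (α j))) ∧
        ∑ k, b k * ((α k ^ t + α k) ^ i)⁻¹ = 0) := by
  classical
  -- basic numerology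
  have ht2 : 2 ≤ t := by omega
  have ht1 : (1 : ℕ) ≤ t := by omega
  -- Frobenius additivity
  have haddt : ∀ a c : F, (a + c) ^ t = a ^ t + c ^ t := by
    intro a c; rw [ht]; exact add_pow_char_pow a c p e
  have haddtP : ∀ a c : F[X], (a + c) ^ t = a ^ t + c ^ t := by
    intro a c; rw [ht]; exact add_pow_char_pow a c p e
  have hxt2 : ∀ x : F, (x ^ t) ^ t = x := by
    intro x
    rw [← pow_mul, ← sq, ← hF]
    exact FiniteField.pow_card x
  have hβt : ∀ x : F, (x ^ t + x) ^ t = x ^ t + x := by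
    intro x
    rw [haddt, hxt2, add_comm]
  have hβ0 : ∀ k, α k ^ t + α k ≠ 0 := fun k => (hrange (α k)).1 ⟨k, rfl⟩
  have hβ1 : ∀ k, (α k ^ t + α k) ^ (t - 1) = 1 := by
    intro k
    have h1 : (α k ^ t + α k) ^ (t - 1) * (α k ^ t + α k) = 1 * (α k ^ t + α k) := by
      rw [← pow_succ, Nat.sub_add_cancel ht1, hβt, one_mul]
    exact mul_right_cancel₀ (hβ0 k) h1
  -- the two Goppa polynomials
  set V : F[X] := X ^ (t - 1) + 1 with hV0
  set W : F[X] := X ^ t + X with hW0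
  have hXV : X * V = W := by
    rw [hV0, hW0, mul_add, mul_one, ← pow_succ', Nat.sub_add_cancel ht1]
  have hdegV : V.degree = ((t - 1 : ℕ) : WithBot ℕ) := by
    rw [hV0, ← C_1, degree_X_pow_add_C (by omega)]
  have hdegW : W.degree = (t : WithBot ℕ) := by
    rw [hW0]
    rw [degree_add_eq_left_of_degree_lt (by rw [degree_X_pow, degree_X]; exact_mod_cast by omega)]
    exact degree_X_pow t
  have hVmonic : V.Monic := by
    rw [hV0]; exact monic_X_pow_add (by rw [degree_one]; exact_mod_cast by omega)
  have hWmonic : W.Monic := by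
    rw [hW0]
    have : (X : F[X]) = X ^ 1 := (pow_one X).symm
    exact monic_X_pow_add (by rw [degree_X]; exact_mod_cast by omega)
  have hV0' : V ≠ 0 := hVmonic.ne_zero
  have hW0' : W ≠ 0 := hWmonic.ne_zero
  -- the full product over F
  have hbig : W * (W ^ (t - 1) - 1) = X ^ (t * t) - X := by
    have h2 : W * W ^ (t - 1) = W ^ t := by
      rw [← pow_succ', Nat.sub_add_cancel ht1]
    have h1 : W ^ t = X ^ (t * t) + X ^ t := by
      rw [hW0, haddtP, ← pow_mul]
    rw [mul_sub, mul_one, h2, h1, hW0]; ring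
  have hprodF : ∏ x : F, (X - C x) = X ^ (t * t) - X := by
    have hone : 1 < Fintype.card F := Fintype.one_lt_card
    have hmon : (X ^ (Fintype.card F) - X : F[X]).Monic :=
      monic_X_pow_sub (by rw [degree_X]; exact_mod_cast hone)
    have hroots := FiniteField.roots_X_pow_card_sub_X F
    have hnd := FiniteField.X_pow_card_sub_X_natDegree_eq F hone
    have hmain := prod_multiset_X_sub_C_of_monic_of_roots_card_eq hmon
      (by rw [hroots, hnd]; exact Finset.card_univ)
    rw [hroots] at hmain
    rw [Finset.prod_eq_multiset_prod, hmain, hF, sq]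
  have hsub1 : ∀ x : F, x ^ t + x = x * (x ^ (t - 1) + 1) := by
    intro x
    rw [mul_add, mul_one, ← pow_succ', Nat.sub_add_cancel ht1]
  -- the product over the locator set
  have hP : ∏ k, (X - C (α k)) = W ^ (t - 1) - 1 := by
    have hA : Finset.image α univ = univ.filter (fun x : F => x ^ t + x ≠ 0) := by
      ext x
      simp only [Finset.mem_image, Finset.mem_filter, Finset.mem_univ, true_and]
      constructor
      · rintro ⟨k, _, rfl⟩; exact (hrange (α k)).1 ⟨k, rfl⟩
      · intro hx; rcases (hrange x).2 hx with ⟨k, rfl⟩; exact ⟨k, rfl⟩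
    
    have hprodA : ∏ k, (X - C (α k)) = ∏ x ∈ univ.filter (fun x : F => x ^ t + x ≠ 0), (X - C x) := by
      rw [← hA, Finset.prod_image (fun a _ a' _ h => hα h)]
    have hpairwise : ∀ (s : Finset F), (↑s : Set F).Pairwise (Function.onFun IsCoprime fun x : F => X - C x) := by
      intro s
      exact fun a _ c _ hne => (pairwise_coprime_X_sub_C Function.injective_id) hne
    have hdvdZ : ∏ x ∈ univ.filter (fun x : F => x ^ t + x = 0), (X - C x) ∣ W := by
      apply Finset.prod_dvd_of_coprime (hpairwise _)
      intro x hx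
      rw [dvd_iff_isRoot]
      simp only [Finset.mem_filter] at hx
      simp [IsRoot, hW0, hx.2]
    have hdvdA : ∏ x ∈ univ.filter (fun x : F => x ^ t + x ≠ 0), (X - C x) ∣ W ^ (t - 1) - 1 := by
      apply Finset.prod_dvd_of_coprime (hpairwise _)
      intro x hx
      rw [dvd_iff_isRoot]
      simp only [Finset.mem_filter] at hx
      rcases (hrange x).2 hx.2 with ⟨k, rfl⟩
      simp [IsRoot, hW0, hβ1 k]
    obtain ⟨a, ha⟩ := hdvdZ
    obtain ⟨c, hc⟩ := hdvdA
    have hmonZ : (∏ x ∈ univ.filter (fun x : F => x ^ t + x = 0), (X - C x)).Monic :=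
      monic_prod_of_monic _ _ (fun x _ => monic_X_sub_C x)
    have hmonA : (∏ x ∈ univ.filter (fun x : F => x ^ t + x ≠ 0), (X - C x)).Monic :=
      monic_prod_of_monic _ _ (fun x _ => monic_X_sub_C x)
    have hWt1monic : (W ^ (t - 1) - 1).Monic := by
      apply Monic.sub_of_left (hWmonic.pow _)
      rw [degree_one, degree_pow, hdegW, nsmul_eq_mul]
      exact_mod_cast Nat.mul_pos (by omega : 0 < t - 1) (by omega : 0 < t)
    have hsplit : (∏ x ∈ univ.filter (fun x : F => x ^ t + x ≠ 0), (X - C x)) *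
        (∏ x ∈ univ.filter (fun x : F => x ^ t + x = 0), (X - C x)) = W * (W ^ (t - 1) - 1) := by
      rw [hbig, ← hprodF]
      rw [← Finset.prod_filter_mul_prod_filter_not univ (fun x : F => x ^ t + x ≠ 0)]
      simp only [not_not]
    rw [hc, ha] at hsplit
    have hne : (∏ x ∈ univ.filter (fun x : F => x ^ t + x ≠ 0), (X - C x)) *
        (∏ x ∈ univ.filter (fun x : F => x ^ t + x = 0), (X - C x)) ≠ 0 :=
      mul_ne_zero hmonA.ne_zero hmonZ.ne_zero
    have hca : c * a = 1 := by
      have h1 : (∏ x ∈ univ.filter (fun x : F => x ^ t + x ≠ 0), (X - C x)) *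
          (∏ x ∈ univ.filter (fun x : F => x ^ t + x = 0), (X - C x)) * (c * a) =
          (∏ x ∈ univ.filter (fun x : F => x ^ t + x ≠ 0), (X - C x)) *
          (∏ x ∈ univ.filter (fun x : F => x ^ t + x = 0), (X - C x)) * 1 := by
        rw [mul_one]
        calc (∏ x ∈ univ.filter (fun x : F => x ^ t + x ≠ 0), (X - C x)) *
            (∏ x ∈ univ.filter (fun x : F => x ^ t + x = 0), (X - C x)) * (c * a)
            = ((∏ x ∈ univ.filter (fun x : F => x ^ t + x = 0), (X - C x)) * a) *
              ((∏ x ∈ univ.filter (fun x : F => x ^ t + x ≠ 0), (X - C x)) * c) := by ring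
          _ = _ := hsplit.symm
      exact mul_left_cancel₀ hne h1
    have hcunit : IsUnit c := IsUnit.of_mul_eq_one a hca
    obtain ⟨r, hr, hrc⟩ := Polynomial.isUnit_iff.1 hcunit
    have hr1 : r = 1 := by
      have hlead := congrArg leadingCoeff hc
      rw [hWt1monic.leadingCoeff, leadingCoeff_mul, hmonA.leadingCoeff, one_mul, ← hrc,
        leadingCoeff_C] at hlead
      exact hlead.symm
    rw [hprodA, hc, ← hrc, hr1, C_1, mul_one]
  -- the auxiliary polynomials u k with (X - C (α k)) * u k = W - C (β k)
  set u : Fin n → F[X] := fun k => 1 + ∑ s ∈ range t, C (α k ^ (t - 1 - s)) * X ^ s with hu0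
  have husum : ∀ k, (∑ s ∈ range t, C (α k ^ (t - 1 - s)) * X ^ s)
      = ∑ s ∈ range t, X ^ s * (C (α k)) ^ (t - 1 - s) := by
    intro k
    refine Finset.sum_congr rfl fun s _ => ?_
    rw [← C_pow]; ring
  have hu : ∀ k, (X - C (α k)) * u k = W - C (α k ^ t + α k) := by
    intro k
    have hg := geom_sum₂_mul X (C (α k)) t
    calc (X - C (α k)) * u k
        = (X - C (α k)) + (∑ s ∈ range t, X ^ s * (C (α k)) ^ (t - 1 - s)) * (X - C (α k)) := by
          rw [hu0]; simp only []; rw [husum k]; ring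
      _ = (X - C (α k)) + (X ^ t - (C (α k)) ^ t) := by rw [hg]
      _ = W - C (α k ^ t + α k) := by rw [hW0, C_add, C_pow]; ring
  have hudeg : ∀ k, (u k).degree ≤ ((t - 1 : ℕ) : WithBot ℕ) := by
    intro k
    rw [hu0]; simp only []
    refine le_trans (degree_add_le _ _) (max_le ?_ ?_)
    · rw [degree_one]; exact_mod_cast Nat.zero_le _
    · refine le_trans (degree_sum_le _ _) (Finset.sup_le fun s hs => ?_)
      refine le_trans (degree_mul_le _ _) ?_
      rw [degree_X_pow]
      refine le_trans (add_le_add degree_C_le le_rfl) ?_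
      rw [zero_add]
      exact_mod_cast Nat.le_pred_of_lt (Finset.mem_range.1 hs)
  have hucoeff : ∀ k d, 1 ≤ d → d < t → (u k).coeff d = α k ^ (t - 1 - d) := by
    intro k d hd1 hdt
    rw [hu0]; simp only []
    rw [coeff_add, coeff_one, if_neg (by omega), zero_add, finset_sum_coeff]
    rw [Finset.sum_eq_single d]
    · rw [coeff_C_mul, coeff_X_pow, if_pos rfl, mul_one]
    · intro s _ hs
      rw [coeff_C_mul, coeff_X_pow, if_neg (fun h => hs h.symm), mul_zero]
    · intro h; exact absurd (Finset.mem_range.2 hdt) h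
  -- the cofactor d k
  have hddvd : ∀ k, (X - C (α k)) ∣ (W ^ (t - 1 - i) - C ((α k ^ t + α k)⁻¹ ^ i)) := by
    intro k
    rw [dvd_iff_isRoot]
    have hWeval : W.eval (α k) = α k ^ t + α k := by rw [hW0]; simp
    simp only [IsRoot, eval_sub, eval_pow, hWeval, eval_C]
    rw [sub_eq_zero, inv_pow, eq_comm, inv_eq_iff_eq_inv, eq_comm, inv_eq_of_mul_eq_one_left]
    rw [← pow_add]
    have h9 : i + (t - 1 - i) = t - 1 := by omega
    rw [h9, hβ1 k]
  choose dd hdd using hddvd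
  -- the representation of each erased product
  have hrep : ∀ k, ∏ j ∈ univ.erase k, (X - C (α j)) =
      (∑ m ∈ range i, C ((α k ^ t + α k)⁻¹ ^ (m + 1)) * W ^ m) * u k + W ^ i * dd k := by
    intro k
    apply mul_left_cancel₀ (X_sub_C_ne_zero (α k))
    rw [Finset.mul_prod_erase univ (fun j => X - C (α j)) (Finset.mem_univ k), hP]
    have htel : (∑ m ∈ range i, C ((α k ^ t + α k)⁻¹ ^ (m + 1)) * W ^ m) *
        (W - C (α k ^ t + α k))
        = C ((α k ^ t + α k)⁻¹ ^ i) * W ^ i - 1 := by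
      have hstep : ∀ m : ℕ, C ((α k ^ t + α k)⁻¹ ^ (m + 1)) * W ^ m * (W - C (α k ^ t + α k))
          = C ((α k ^ t + α k)⁻¹ ^ (m + 1)) * W ^ (m + 1)
            - C ((α k ^ t + α k)⁻¹ ^ m) * W ^ m := by
        intro m
        have hc : C ((α k ^ t + α k)⁻¹ ^ (m + 1)) * C (α k ^ t + α k)
            = C ((α k ^ t + α k)⁻¹ ^ m) := by
          rw [← C_mul]
          congr 1
          rw [pow_succ, mul_assoc, inv_mul_cancel₀ (hβ0 k), mul_one]
        calc C ((α k ^ t + α k)⁻¹ ^ (m + 1)) * W ^ m * (W - C (α k ^ t + α k))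
            = C ((α k ^ t + α k)⁻¹ ^ (m + 1)) * W ^ (m + 1)
              - (C ((α k ^ t + α k)⁻¹ ^ (m + 1)) * C (α k ^ t + α k)) * W ^ m := by ring
          _ = _ := by rw [hc]
      calc (∑ m ∈ range i, C ((α k ^ t + α k)⁻¹ ^ (m + 1)) * W ^ m) * (W - C (α k ^ t + α k))
          = ∑ m ∈ range i, (C ((α k ^ t + α k)⁻¹ ^ (m + 1)) * W ^ (m + 1)
              - C ((α k ^ t + α k)⁻¹ ^ m) * W ^ m) := by
            rw [Finset.sum_mul]
            exact Finset.sum_congr rfl fun m _ => hstep m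
        _ = C ((α k ^ t + α k)⁻¹ ^ i) * W ^ i - C ((α k ^ t + α k)⁻¹ ^ 0) * W ^ 0 :=
            Finset.sum_range_sub (fun m => C ((α k ^ t + α k)⁻¹ ^ m) * W ^ m) i
        _ = C ((α k ^ t + α k)⁻¹ ^ i) * W ^ i - 1 := by simp
    calc W ^ (t - 1) - 1
        = (C ((α k ^ t + α k)⁻¹ ^ i) * W ^ i - 1)
          + W ^ i * (W ^ (t - 1 - i) - C ((α k ^ t + α k)⁻¹ ^ i)) := by
          rw [mul_sub, ← pow_add]
          have : i + (t - 1 - i) = t - 1 := by omega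
          rw [this]; ring
      _ = (∑ m ∈ range i, C ((α k ^ t + α k)⁻¹ ^ (m + 1)) * W ^ m) * (W - C (α k ^ t + α k))
          + W ^ i * ((X - C (α k)) * dd k) := by rw [htel, ← hdd k]
      _ = (X - C (α k)) * ((∑ m ∈ range i, C ((α k ^ t + α k)⁻¹ ^ (m + 1)) * W ^ m) * u k
          + W ^ i * dd k) := by rw [← hu k]; ring
  -- the truncated syndrome T
  set σp : ℕ → F[X] := fun m => ∑ k, C (b k * (α k ^ t + α k)⁻¹ ^ m) * u k with hσ0
  set T : F[X] := ∑ m ∈ range i, W ^ m * σp (m + 1) with hT0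
  set SS : F[X] := ∑ k, C (b k) * ∏ j ∈ univ.erase k, (X - C (α j)) with hSS0
  have hST : SS = T + W ^ i * (∑ k, C (b k) * dd k) := by
    rw [hSS0, hT0]
    calc ∑ k, C (b k) * ∏ j ∈ univ.erase k, (X - C (α j))
        = ∑ k, ((∑ m ∈ range i, C (b k * (α k ^ t + α k)⁻¹ ^ (m + 1)) * (W ^ m * u k))
            + W ^ i * (C (b k) * dd k)) := by
          refine Finset.sum_congr rfl fun k _ => ?_
          rw [hrep k, mul_add]
          congr 1
          · rw [Finset.sum_mul, Finset.mul_sum]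
            refine Finset.sum_congr rfl fun m _ => ?_
            rw [C_mul]; ring
          · ring
      _ = (∑ k, ∑ m ∈ range i, C (b k * (α k ^ t + α k)⁻¹ ^ (m + 1)) * (W ^ m * u k))
            + W ^ i * (∑ k, C (b k) * dd k) := by
          rw [Finset.sum_add_distrib, Finset.mul_sum]
      _ = (∑ m ∈ range i, W ^ m * σp (m + 1)) + W ^ i * (∑ k, C (b k) * dd k) := by
          congr 1
          rw [Finset.sum_comm]
          refine Finset.sum_congr rfl fun m _ => ?_
          simp only [hσ0]
          rw [Finset.mul_sum]
          refine Finset.sum_congr rfl fun k _ => ?_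
          ring
  -- degree bounds
  have hσdeg : ∀ m, (σp m).degree ≤ ((t - 1 : ℕ) : WithBot ℕ) := by
    intro m
    rw [hσ0]; simp only []
    refine le_trans (degree_sum_le _ _) (Finset.sup_le fun k _ => ?_)
    refine le_trans (degree_mul_le _ _) ?_
    refine le_trans (add_le_add degree_C_le (hudeg k)) ?_
    rw [zero_add]
  have hWmdeg : ∀ m : ℕ, (W ^ m).degree = ((m * t : ℕ) : WithBot ℕ) := by
    intro m
    rw [degree_pow, hdegW, nsmul_eq_mul]
    exact_mod_cast rfl
  have hPpdeg : ∀ j, (∑ m ∈ range j, W ^ m * σp (m + 1)).degree < ((j * t : ℕ) : WithBot ℕ) ∨ j = 0 := by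
    intro j
    rcases Nat.eq_zero_or_pos j with hj | hj
    · right; exact hj
    left
    refine lt_of_le_of_lt (degree_sum_le _ _) ?_
    rw [Finset.sup_lt_iff (by exact_mod_cast WithBot.bot_lt_coe _)]
    intro m hm
    refine lt_of_le_of_lt (degree_mul_le _ _) ?_
    rw [hWmdeg m]
    refine lt_of_le_of_lt (add_le_add le_rfl (hσdeg (m + 1))) ?_
    have hmj : m < j := Finset.mem_range.1 hm
    have : ((m * t : ℕ) : WithBot ℕ) + ((t - 1 : ℕ) : WithBot ℕ) = ((m * t + (t - 1) : ℕ) : WithBot ℕ) := by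
      exact_mod_cast rfl
    rw [this]
    have h8 : m * t + t ≤ j * t := by
      have h9 : (m + 1) * t ≤ j * t := Nat.mul_le_mul_right t (by omega)
      rwa [add_mul, one_mul] at h9
    exact_mod_cast (by omega : m * t + (t - 1) < j * t)
  have hTdeg : T.degree < ((i * t : ℕ) : WithBot ℕ) := by
    rw [hT0]
    rcases hPpdeg i with h | h
    · exact h
    · exact absurd h (by omega)
  have hWideg : (W ^ i).degree = ((i * t : ℕ) : WithBot ℕ) := hWmdeg i
  have hWiT : W ^ i ∣ SS ↔ T = 0 := by
    rw [hST]
    constructor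
    · intro hdvd
      have h2 : W ^ i ∣ T := by
        have := dvd_sub hdvd (dvd_mul_right (W ^ i) (∑ k, C (b k) * dd k))
        rwa [add_sub_cancel_right] at this
      by_contra hne
      have hle := degree_le_of_dvd h2 hne
      rw [hWideg] at hle
      exact absurd (lt_of_le_of_lt hle hTdeg) (lt_irrefl _)
    · intro h0; rw [h0, zero_add]; exact dvd_mul_right _ _
  have hVWpow : V ^ i ∣ W ^ i := ⟨X ^ i, by rw [← hXV, mul_pow]; ring⟩
  have hViT : V ^ i ∣ SS ↔ V ^ i ∣ T := by
    rw [hST]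
    constructor
    · intro hdvd
      have h7 := dvd_sub hdvd
        (dvd_trans hVWpow (dvd_mul_right (W ^ i) (∑ k, C (b k) * dd k)))
      rwa [add_sub_cancel_right] at h7
    · intro hdvd
      exact dvd_add hdvd
        (dvd_trans hVWpow (dvd_mul_right (W ^ i) (∑ k, C (b k) * dd k)))
  -- the moment sums
  set M : ℕ → ℕ → F := fun j r => ∑ k, b k * (α k ^ t + α k)⁻¹ ^ j * α k ^ r with hM0
  have hMcheck : M i 0 = ∑ k, b k * ((α k ^ t + α k) ^ i)⁻¹ := by
    rw [hM0]
    refine Finset.sum_congr rfl fun k _ => ?_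
    rw [pow_zero, mul_one, inv_pow]
  -- MAIN LEMMA: the structure of T when V ^ i divides it
  have hmain : V ^ i ∣ T → T = C (M i 0) * (X ^ (i - 1) * V ^ i) := by
    intro hVT
    set Pp : ℕ → F[X] := fun j => ∑ m ∈ range j, W ^ m * σp (m + 1) with hPp0
    have hTP : T = Pp i := by rw [hT0, hPp0]
    set w : ℕ → F[X] := fun j => Pp j /ₘ (V ^ j) with hw0
    have hVWj : ∀ j : ℕ, V ^ j ∣ W ^ j := fun j => ⟨X ^ j, by rw [← hXV, mul_pow]; ring⟩
    have hsplitPp : ∀ j, j ≤ i →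
        Pp i = Pp j + W ^ j * ∑ m ∈ range (i - j), W ^ m * σp (j + m + 1) := by
      intro j hj
      rw [hPp0]; simp only []
      rw [Finset.range_eq_Ico, ← Finset.sum_Ico_consecutive _ (Nat.zero_le j) hj,
        ← Finset.range_eq_Ico]
      congr 1
      rw [Finset.sum_Ico_eq_sum_range, Finset.mul_sum]
      refine Finset.sum_congr rfl fun m _ => ?_
      rw [pow_add, mul_assoc]
    have hw : ∀ j, j ≤ i → Pp j = V ^ j * w j := by
      intro j hj
      have hdvd : V ^ j ∣ Pp j := by
        have h1 := hsplitPp j hj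
        have h2 : V ^ j ∣ Pp i := dvd_trans (pow_dvd_pow V hj) (hTP ▸ hVT)
        have h3 : V ^ j ∣ W ^ j * ∑ m ∈ range (i - j), W ^ m * σp (j + m + 1) :=
          dvd_trans (hVWj j) (dvd_mul_right _ _)
        have h4 := dvd_sub h2 h3
        rw [h1, add_sub_cancel_right] at h4
        exact h4
      have hmod := (Polynomial.modByMonic_eq_zero_iff_dvd (hVmonic.pow j)).2 hdvd
      have := Polynomial.modByMonic_add_div (Pp j) (V ^ j)
      rw [hmod, zero_add] at this
      rw [hw0]; exact this.symm
    have hwdeg : ∀ j, j ≤ i → (w j).degree < (j : WithBot ℕ) := by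
      intro j hj
      by_cases hwz : w j = 0
      · rw [hwz, degree_zero]; exact_mod_cast WithBot.bot_lt_coe _
      rcases Nat.eq_zero_or_pos j with hj0 | hj0
      · exfalso
        apply hwz
        have h1 := hw j hj
        rw [hj0, pow_zero, one_mul] at h1
        have h0 : Pp 0 = 0 := by rw [hPp0]; simp
        rw [hj0, ← h1, h0]
      have h1 : (Pp j).degree < ((j * t : ℕ) : WithBot ℕ) := by
        rcases hPpdeg j with h | h
        · rw [hPp0]; exact h
        · omega
      rw [hw j hj, degree_mul, degree_pow, hdegV] at h1
      have h2 : (w j).degree = ((w j).natDegree : WithBot ℕ) := degree_eq_natDegree hwz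
      rw [h2] at h1 ⊢
      rw [nsmul_eq_mul] at h1
      have h3 : ((j * (t - 1) : ℕ) : WithBot ℕ) + ((w j).natDegree : WithBot ℕ) < ((j * t : ℕ) : WithBot ℕ) := by
        exact_mod_cast h1
      have h4 : j * (t - 1) + (w j).natDegree < j * t := by exact_mod_cast h3
      have h5 : j * (t - 1) + j = j * t := by
        rw [← Nat.mul_succ]
        congr 1
        omega
      exact_mod_cast (by omega : (w j).natDegree < j)
    have heq : ∀ j, j + 1 ≤ i → V * w (j + 1) - w j = X ^ j * σp (j + 1) := by
      intro j hj
      have h1 : Pp (j + 1) - Pp j = W ^ j * σp (j + 1) := by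
        rw [hPp0]; simp only []
        rw [Finset.sum_range_succ, add_sub_cancel_left]
      rw [hw (j + 1) hj, hw j (by omega), ← hXV, mul_pow] at h1
      have h2 : (V ^ j) * (V * w (j + 1) - w j) = (V ^ j) * (X ^ j * σp (j + 1)) := by
        calc (V ^ j) * (V * w (j + 1) - w j)
            = V ^ (j + 1) * w (j + 1) - V ^ j * w j := by rw [pow_succ]; ring
          _ = X ^ j * V ^ j * σp (j + 1) := h1
          _ = (V ^ j) * (X ^ j * σp (j + 1)) := by ring
      exact mul_left_cancel₀ (pow_ne_zero j hV0') h2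
    have hcoeffstep : ∀ j, j + 1 ≤ i → ∀ s, s < j → (w (j + 1)).coeff s = (w j).coeff s := by
      intro j hj s hs
      have h := congrArg (fun P : F[X] => P.coeff s) (heq j hj)
      try simp only [] at h
      rw [coeff_sub, hV0, add_mul, one_mul, coeff_add,
        mul_comm (X ^ (t - 1)) (w (j + 1)), coeff_mul_X_pow',
        if_neg (by omega : ¬ t - 1 ≤ s),
        mul_comm (X ^ j) (σp (j + 1)), coeff_mul_X_pow',
        if_neg (by omega : ¬ j ≤ s), zero_add] at h
      exact sub_eq_zero.1 h
    have hchain : ∀ md j s, s < j → j + md ≤ i → (w (j + md)).coeff s = (w j).coeff s := by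
      intro md
      induction md with
      | zero => intro j s _ _; rfl
      | succ m ih =>
        intro j s hs hji
        have h1 : (w (j + m + 1)).coeff s = (w (j + m)).coeff s :=
          hcoeffstep (j + m) (by omega) s (by omega)
        have h2 := ih j s hs (by omega)
        calc (w (j + (m + 1))).coeff s = (w (j + m + 1)).coeff s := rfl
          _ = (w (j + m)).coeff s := h1
          _ = (w j).coeff s := h2
    have hlam : ∀ j s, s < j → j ≤ i → (w j).coeff s = (w i).coeff s := by
      intro j s hs hj
      have := hchain (i - j) j s hs (by omega)
      rw [show j + (i - j) = i by omega] at this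
      exact this.symm
    have hMlam : ∀ j r, j + 1 ≤ i → r ≤ j → M (j + 1) r = (w i).coeff (j - r) := by
      intro j r hj hr
      have h := congrArg (fun P : F[X] => P.coeff (t - 1 - r + j)) (heq j hj)
      try simp only [] at h
      rw [coeff_sub, hV0, add_mul, one_mul, coeff_add,
        mul_comm (X ^ (t - 1)) (w (j + 1)), coeff_mul_X_pow',
        if_pos (by omega : t - 1 ≤ t - 1 - r + j),
        show t - 1 - r + j - (t - 1) = j - r by omega,
        mul_comm (X ^ j) (σp (j + 1)), coeff_mul_X_pow',
        if_pos (by omega : j ≤ t - 1 - r + j),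
        show t - 1 - r + j - j = t - 1 - r by omega] at h
      have hz1 : (w (j + 1)).coeff (t - 1 - r + j) = 0 := by
        apply coeff_eq_zero_of_degree_lt
        refine lt_of_lt_of_le (hwdeg (j + 1) hj) ?_
        exact_mod_cast (by omega : j + 1 ≤ t - 1 - r + j)
      have hz2 : (w j).coeff (t - 1 - r + j) = 0 := by
        apply coeff_eq_zero_of_degree_lt
        refine lt_of_lt_of_le (hwdeg j (by omega)) ?_
        exact_mod_cast (by omega : j ≤ t - 1 - r + j)
      rw [hz1, hz2, add_zero, sub_zero] at h
      have hσc : (σp (j + 1)).coeff (t - 1 - r) = M (j + 1) r := by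
        simp only [hσ0, hM0]
        rw [finset_sum_coeff]
        refine Finset.sum_congr rfl fun k _ => ?_
        rw [coeff_C_mul, hucoeff k (t - 1 - r) (by omega) (by omega),
          show t - 1 - (t - 1 - r) = r by omega]
      rw [hσc] at h
      rw [← h]
      exact hlam (j + 1) (j - r) (by omega) hj
    -- Frobenius kills the lower coefficients of w i
    have hphi : ∀ x : F, x ^ t = iterateFrobenius F p e x := by
      intro x; rw [iterateFrobenius_def, ← ht]
    have hβinv : ∀ (k : Fin n) (m : ℕ), m ≤ i → (α k ^ t + α k)⁻¹ ^ i * (α k ^ t + α k) ^ m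
        = (α k ^ t + α k)⁻¹ ^ (i - m) := by
      intro k m hm
      have h1 : (α k ^ t + α k)⁻¹ ^ i = (α k ^ t + α k)⁻¹ ^ (i - m) * (α k ^ t + α k)⁻¹ ^ m := by
        rw [← pow_add]; congr 1; omega
      rw [h1, mul_assoc, ← mul_pow, inv_mul_cancel₀ (hβ0 k), one_pow, mul_one]
    have hkill : ∀ r, 1 ≤ r → r ≤ i - 1 → (w i).coeff (i - 1 - r) = 0 := by
      intro r hr1 hri
      have hMir : M i r = (w i).coeff (i - 1 - r) := by
        have h := hMlam (i - 1) r (by omega) (by omega)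
        rwa [show i - 1 + 1 = i by omega] at h
      have hpow : (M i r) ^ t = 0 := by
        have hc1 : (M i r) ^ t
            = ∑ k, b k * (α k ^ t + α k)⁻¹ ^ i * ((α k ^ t + α k) - α k) ^ r := by
          rw [hphi, hM0]
          simp only []
          rw [map_sum]
          refine Finset.sum_congr rfl fun k _ => ?_
          rw [map_mul, map_mul, map_pow, map_pow, ← hphi, ← hphi, ← hphi, hb k]
          congr 2
          · rw [inv_pow, hβt]
          · ring_nf
        have hc2 : ∀ k : Fin n, b k * (α k ^ t + α k)⁻¹ ^ i * ((α k ^ t + α k) - α k) ^ r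
            = ∑ m ∈ range (r + 1), ((-1 : F) ^ (m + r) * (r.choose m : F))
              * (b k * (α k ^ t + α k)⁻¹ ^ (i - m) * α k ^ (r - m)) := by
          intro k
          rw [sub_pow, Finset.mul_sum]
          refine Finset.sum_congr rfl fun m hm => ?_
          have hmr : m ≤ r := by
            have := Finset.mem_range.1 hm; omega
          rw [← hβinv k m (by omega)]
          ring
        rw [hc1]
        calc ∑ k, b k * (α k ^ t + α k)⁻¹ ^ i * ((α k ^ t + α k) - α k) ^ r
            = ∑ k, ∑ m ∈ range (r + 1), ((-1 : F) ^ (m + r) * (r.choose m : F))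
              * (b k * (α k ^ t + α k)⁻¹ ^ (i - m) * α k ^ (r - m)) :=
              Finset.sum_congr rfl fun k _ => hc2 k
          _ = ∑ m ∈ range (r + 1), ((-1 : F) ^ (m + r) * (r.choose m : F))
              * M (i - m) (r - m) := by
              rw [Finset.sum_comm]
              refine Finset.sum_congr rfl fun m _ => ?_
              rw [hM0]; simp only []
              rw [Finset.mul_sum]
          _ = ∑ m ∈ range (r + 1), ((-1 : F) ^ (m + r) * (r.choose m : F))
              * (w i).coeff (i - 1 - r) := by
              refine Finset.sum_congr rfl fun m hm => ?_
              have hmr : m ≤ r := by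
                have := Finset.mem_range.1 hm; omega
              congr 1
              have h := hMlam (i - m - 1) (r - m) (by omega) (by omega)
              rwa [show i - m - 1 + 1 = i - m by omega,
                show i - m - 1 - (r - m) = i - 1 - r by omega] at h
          _ = (∑ m ∈ range (r + 1), ((-1 : F) ^ (m + r) * (r.choose m : F)))
              * (w i).coeff (i - 1 - r) := (Finset.sum_mul _ _ _).symm
          _ = 0 := by
              have hz : (∑ m ∈ range (r + 1), ((-1 : F) ^ (m + r) * (r.choose m : F))) = 0 := by
                have h1 : (∑ m ∈ range (r + 1), ((-1 : F) ^ (m + r) * (r.choose m : F)))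
                    = (-1 : F) ^ r * ∑ m ∈ range (r + 1), ((-1 : F) ^ m * (r.choose m : F)) := by
                  rw [Finset.mul_sum]
                  refine Finset.sum_congr rfl fun m _ => ?_
                  rw [pow_add]; ring
                have h2 : (∑ m ∈ range (r + 1), ((-1 : F) ^ m * (r.choose m : F))) = 0 := by
                  have h3 := Int.alternating_sum_range_choose_of_ne (show r ≠ 0 by omega)
                  have h4 : ((∑ m ∈ range (r + 1), ((-1) ^ m * (r.choose m : ℤ)) : ℤ) : F) = 0 := by
                    rw [h3]; exact Int.cast_zero
                  push_cast at h4
                  exact h4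
                rw [h1, h2, mul_zero]
              rw [hz, zero_mul]
      rw [← hMir]
      exact pow_eq_zero_iff (show t ≠ 0 by omega) |>.1 hpow
    -- hence w i is a single monomial
    have hMi0 : M i 0 = (w i).coeff (i - 1) := by
      have h := hMlam (i - 1) 0 (by omega) (by omega)
      rwa [show i - 1 + 1 = i by omega, Nat.sub_zero] at h
    have hwi : w i = C (M i 0) * X ^ (i - 1) := by
      ext s
      rw [coeff_C_mul, coeff_X_pow]
      by_cases hs : s = i - 1
      · rw [if_pos hs, mul_one, hMi0, hs]
      · rw [if_neg hs, mul_zero]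
        rcases lt_or_gt_of_ne hs with hlt | hgt
        · have := hkill (i - 1 - s) (by omega) (by omega)
          rwa [show i - 1 - (i - 1 - s) = s by omega] at this
        · apply coeff_eq_zero_of_degree_lt
          refine lt_of_lt_of_le (hwdeg i le_rfl) ?_
          exact_mod_cast (by omega : i ≤ s)
    rw [hTP, hw i le_rfl, hwi]
    ring
  -- final assembly
  constructor
  · intro hWd
    have hTz : T = 0 := hWiT.1 hWd
    have hVS : V ^ i ∣ SS := hViT.2 (by rw [hTz]; exact dvd_zero _)
    refine ⟨hVS, ?_⟩
    have hm := hmain (by rw [hTz]; exact dvd_zero _)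
    rw [hTz] at hm
    have hXVne : (X ^ (i - 1) * V ^ i : F[X]) ≠ 0 :=
      mul_ne_zero (pow_ne_zero _ X_ne_zero) (pow_ne_zero _ hV0')
    have hC0 : C (M i 0) = 0 := by
      rcases mul_eq_zero.1 hm.symm with h | h
      · exact h
      · exact absurd h hXVne
    have hM00 : M i 0 = 0 := by
      rwa [C_eq_zero] at hC0
    rw [← hMcheck]
    exact hM00
  · rintro ⟨hVS, hcheck⟩
    have hVT := hViT.1 hVS
    have hm := hmain hVT
    have hM00 : M i 0 = 0 := by rw [hMcheck]; exact hcheck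
    rw [hM00, map_zero, zero_mul] at hm
    exact hWiT.2 hm

/-- with `t = q^l`, `F = GF(t²)` and `L` enumerating
`{α ∈ F : α ≠ 0 ∧ α^{t−1} + 1 ≠ 0}`, for `1 ≤ i ≤ q − 2` a word `c` lies in
`Γ(L, (X^t + X)^i)` iff it lies in `Γ(L, (X^{t−1} + 1)^i)` and satisfies the extra parity
check `Σₖ cₖ (αₖ^t + αₖ)^{−i} = 0`. -/
theorem goppa_G2_iff_G1_and_check {K F : Type*} [Field K] [Fintype K]
    [Field F] [Fintype F] [Algebra K F]
    (q l : ℕ) (hq : Fintype.card K = q) (hl : 1 ≤ l)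
    (hF : Fintype.card F = (q ^ l) ^ 2)
    {n : ℕ} (α : Fin n → F) (hα : Function.Injective α)
    (hrange : ∀ x : F, x ∈ Set.range α ↔ (x ≠ 0 ∧ x ^ (q ^ l - 1) + 1 ≠ 0))
    (i : ℕ) (hi1 : 1 ≤ i) (hi2 : i ≤ q - 2) (c : Fin n → K) :
    ((Polynomial.X ^ (q ^ l) + Polynomial.X) ^ i ∣ goppaSum α c) ↔
      (((Polynomial.X ^ (q ^ l - 1) + 1) ^ i ∣ goppaSum α c) ∧
        ∑ k, algebraMap K F (c k) * ((α k ^ (q ^ l) + α k) ^ i)⁻¹ = 0) := by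
  classical
  obtain ⟨p, hpK⟩ := CharP.exists K
  haveI := hpK
  have hpprime : p.Prime := CharP.char_is_prime K p
  haveI : Fact p.Prime := ⟨hpprime⟩
  obtain ⟨a, -, hcard⟩ := FiniteField.card K p
  haveI : CharP F p := charP_of_injective_algebraMap (algebraMap K F).injective p
  have hq' : q = p ^ (a : ℕ) := by rw [← hq, hcard]
  have ht : q ^ l = p ^ ((a : ℕ) * l) := by rw [hq', ← pow_mul]
  have hq2 : 2 ≤ q := by rw [← hq]; exact Fintype.one_lt_card
  have hq3 : i + 2 ≤ q := by omega
  have hqt : q ≤ q ^ l := Nat.le_self_pow (by omega) q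
  have hit : i + 2 ≤ q ^ l := le_trans hq3 hqt
  have ht1 : 1 ≤ q ^ l := by omega
  have hfac : ∀ x : F, x ^ (q ^ l) + x = x * (x ^ (q ^ l - 1) + 1) := by
    intro x
    rw [mul_add, mul_one, ← pow_succ', Nat.sub_add_cancel ht1]
  have hrange' : ∀ x : F, x ∈ Set.range α ↔ x ^ (q ^ l) + x ≠ 0 := by
    intro x
    rw [hrange x, hfac x, mul_ne_zero_iff]
  have hb : ∀ k, (algebraMap K F (c k)) ^ (q ^ l) = algebraMap K F (c k) := by
    intro k
    rw [← map_pow]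
    congr 1
    rw [← hq]
    exact FiniteField.pow_card_pow l (c k)
  have hmaster := goppa_master p ((a : ℕ) * l) (q ^ l) ht hF α hα hrange' i hi1 hit
    (fun k => algebraMap K F (c k)) hb
  simpa only [goppaSum] using hmaster
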